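/- arXiv:0802.3536 — 3 statements merged into one kernel-verified Lean document; each statement's English description precedes it below -/
import Mathlib

section
/- For every orthonormal triple of vectors x, y, z in ℝ⁷, one has |φ(x,y,z)| ≤ 1; that is, the 3-form φ has comass one and is a calibration on ℝ⁷ (with equality φ(x,y,z) = 1 characterising the associative 3-planes). -/
open RealInnerProductSpace

set_option maxHeartbeats 1000000

noncomputable section

/-- `ℝ⁷` with the Euclidean inner product. -/
abbrev R7 := EuclideanSpace ℝ (Fin 7)

/-- The standard basis vectors `e₁, …, e₇` of `ℝ⁷` (0-indexed). -/
def stdBasis (i : Fin 7) : R7 := EuclideanSpace.single i 1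

/-- `dx_i ∧ dx_j ∧ dx_k` evaluated on the triple `(x, y, z)` (0-indexed). -/
def dx3 (i j k : Fin 7) (x y z : R7) : ℝ :=
  x i * (y j * z k - y k * z j) - x j * (y i * z k - y k * z i)
    + x k * (y i * z j - y j * z i)

/-- The associative calibration
`φ = dx₁₂₃ + dx₁₄₅ + dx₁₆₇ + dx₂₄₆ − dx₂₅₇ − dx₃₄₇ − dx₃₅₆` (0-indexed here). -/
def phi (x y z : R7) : ℝ :=
  dx3 0 1 2 x y z + dx3 0 3 4 x y z + dx3 0 5 6 x y z + dx3 1 3 5 x y z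
    - dx3 1 4 6 x y z - dx3 2 3 6 x y z - dx3 2 4 5 x y z

lemma cs7 (c0 c1 c2 c3 c4 c5 c6 z0 z1 z2 z3 z4 z5 z6 : ℝ) (hc : c0^2 + c1^2 + c2^2 + c3^2 + c4^2 + c5^2 + c6^2 = 1) (hz : z0^2 + z1^2 + z2^2 + z3^2 + z4^2 + z5^2 + z6^2 = 1) :
    |c0*z0 + c1*z1 + c2*z2 + c3*z3 + c4*z4 + c5*z5 + c6*z6| ≤ 1 := by
  have key : (c0^2 + c1^2 + c2^2 + c3^2 + c4^2 + c5^2 + c6^2) * (z0^2 + z1^2 + z2^2 + z3^2 + z4^2 + z5^2 + z6^2) - (c0*z0 + c1*z1 + c2*z2 + c3*z3 + c4*z4 + c5*z5 + c6*z6)^2 =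
      (c0*z1 - c1*z0)^2 + (c0*z2 - c2*z0)^2 + (c0*z3 - c3*z0)^2 + (c0*z4 - c4*z0)^2 + (c0*z5 - c5*z0)^2 + (c0*z6 - c6*z0)^2 + (c1*z2 - c2*z1)^2 + (c1*z3 - c3*z1)^2 + (c1*z4 - c4*z1)^2 + (c1*z5 - c5*z1)^2 + (c1*z6 - c6*z1)^2 + (c2*z3 - c3*z2)^2 + (c2*z4 - c4*z2)^2 + (c2*z5 - c5*z2)^2 + (c2*z6 - c6*z2)^2 + (c3*z4 - c4*z3)^2 + (c3*z5 - c5*z3)^2 + (c3*z6 - c6*z3)^2 + (c4*z5 - c5*z4)^2 + (c4*z6 - c6*z4)^2 + (c5*z6 - c6*z5)^2 := by ring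
  rw [hc, hz] at key
  have h2 : (c0*z0 + c1*z1 + c2*z2 + c3*z3 + c4*z4 + c5*z5 + c6*z6)^2 ≤ 1 := by linarith [sq_nonneg (c0*z1 - c1*z0), sq_nonneg (c0*z2 - c2*z0), sq_nonneg (c0*z3 - c3*z0), sq_nonneg (c0*z4 - c4*z0), sq_nonneg (c0*z5 - c5*z0), sq_nonneg (c0*z6 - c6*z0), sq_nonneg (c1*z2 - c2*z1), sq_nonneg (c1*z3 - c3*z1), sq_nonneg (c1*z4 - c4*z1), sq_nonneg (c1*z5 - c5*z1), sq_nonneg (c1*z6 - c6*z1), sq_nonneg (c2*z3 - c3*z2), sq_nonneg (c2*z4 - c4*z2), sq_nonneg (c2*z5 - c5*z2), sq_nonneg (c2*z6 - c6*z2), sq_nonneg (c3*z4 - c4*z3), sq_nonneg (c3*z5 - c5*z3), sq_nonneg (c3*z6 - c6*z3), sq_nonneg (c4*z5 - c5*z4), sq_nonneg (c4*z6 - c6*z4), sq_nonneg (c5*z6 - c6*z5)]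
  have h3 := abs_nonneg (c0*z0 + c1*z1 + c2*z2 + c3*z3 + c4*z4 + c5*z5 + c6*z6)
  nlinarith [sq_abs (c0*z0 + c1*z1 + c2*z2 + c3*z3 + c4*z4 + c5*z5 + c6*z6)]

lemma scalar_main (x0 x1 x2 x3 x4 x5 x6 y0 y1 y2 y3 y4 y5 y6 z0 z1 z2 z3 z4 z5 z6 : ℝ)
    (hx : x0^2 + x1^2 + x2^2 + x3^2 + x4^2 + x5^2 + x6^2 = 1) (hy : y0^2 + y1^2 + y2^2 + y3^2 + y4^2 + y5^2 + y6^2 = 1) (hz : z0^2 + z1^2 + z2^2 + z3^2 + z4^2 + z5^2 + z6^2 = 1)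
    (hxy : x0*y0 + x1*y1 + x2*y2 + x3*y3 + x4*y4 + x5*y5 + x6*y6 = 0) :
    |(x0*(y1*z2 - y2*z1) - x1*(y0*z2 - y2*z0) + x2*(y0*z1 - y1*z0)) + (x0*(y3*z4 - y4*z3) - x3*(y0*z4 - y4*z0) + x4*(y0*z3 - y3*z0)) + (x0*(y5*z6 - y6*z5) - x5*(y0*z6 - y6*z0) + x6*(y0*z5 - y5*z0)) + (x1*(y3*z5 - y5*z3) - x3*(y1*z5 - y5*z1) + x5*(y1*z3 - y3*z1)) - (x1*(y4*z6 - y6*z4) - x4*(y1*z6 - y6*z1) + x6*(y1*z4 - y4*z1)) - (x2*(y3*z6 - y6*z3) - x3*(y2*z6 - y6*z2) + x6*(y2*z3 - y3*z2)) - (x2*(y4*z5 - y5*z4) - x4*(y2*z5 - y5*z2) + x5*(y2*z4 - y4*z2))| ≤ 1 := by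
  have hc : (x1*y2 - x2*y1 + x3*y4 - x4*y3 + x5*y6 - x6*y5)^2 + (-(x0*y2) + x2*y0 + x3*y5 - x4*y6 - x5*y3 + x6*y4)^2 + (x0*y1 - x1*y0 - x3*y6 - x4*y5 + x5*y4 + x6*y3)^2 + (-(x0*y4) - x1*y5 + x2*y6 + x4*y0 + x5*y1 - x6*y2)^2 + (x0*y3 + x1*y6 + x2*y5 - x3*y0 - x5*y2 - x6*y1)^2 + (-(x0*y6) + x1*y3 - x2*y4 - x3*y1 + x4*y2 + x6*y0)^2 + (x0*y5 - x1*y4 - x2*y3 + x3*y2 + x4*y1 - x5*y0)^2 = 1 := by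
    have h : (x1*y2 - x2*y1 + x3*y4 - x4*y3 + x5*y6 - x6*y5)^2 + (-(x0*y2) + x2*y0 + x3*y5 - x4*y6 - x5*y3 + x6*y4)^2 + (x0*y1 - x1*y0 - x3*y6 - x4*y5 + x5*y4 + x6*y3)^2 + (-(x0*y4) - x1*y5 + x2*y6 + x4*y0 + x5*y1 - x6*y2)^2 + (x0*y3 + x1*y6 + x2*y5 - x3*y0 - x5*y2 - x6*y1)^2 + (-(x0*y6) + x1*y3 - x2*y4 - x3*y1 + x4*y2 + x6*y0)^2 + (x0*y5 - x1*y4 - x2*y3 + x3*y2 + x4*y1 - x5*y0)^2 =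
        (x0^2 + x1^2 + x2^2 + x3^2 + x4^2 + x5^2 + x6^2) * (y0^2 + y1^2 + y2^2 + y3^2 + y4^2 + y5^2 + y6^2) - (x0*y0 + x1*y1 + x2*y2 + x3*y3 + x4*y4 + x5*y5 + x6*y6)^2 := by ring
    rw [hxy, hx, hy] at h
    linarith
  have h := cs7 (x1*y2 - x2*y1 + x3*y4 - x4*y3 + x5*y6 - x6*y5) (-(x0*y2) + x2*y0 + x3*y5 - x4*y6 - x5*y3 + x6*y4) (x0*y1 - x1*y0 - x3*y6 - x4*y5 + x5*y4 + x6*y3) (-(x0*y4) - x1*y5 + x2*y6 + x4*y0 + x5*y1 - x6*y2) (x0*y3 + x1*y6 + x2*y5 - x3*y0 - x5*y2 - x6*y1) (-(x0*y6) + x1*y3 - x2*y4 - x3*y1 + x4*y2 + x6*y0) (x0*y5 - x1*y4 - x2*y3 + x3*y2 + x4*y1 - x5*y0) z0 z1 z2 z3 z4 z5 z6 hc hz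
  have heq : (x1*y2 - x2*y1 + x3*y4 - x4*y3 + x5*y6 - x6*y5)*z0 + (-(x0*y2) + x2*y0 + x3*y5 - x4*y6 - x5*y3 + x6*y4)*z1 + (x0*y1 - x1*y0 - x3*y6 - x4*y5 + x5*y4 + x6*y3)*z2 + (-(x0*y4) - x1*y5 + x2*y6 + x4*y0 + x5*y1 - x6*y2)*z3 + (x0*y3 + x1*y6 + x2*y5 - x3*y0 - x5*y2 - x6*y1)*z4 + (-(x0*y6) + x1*y3 - x2*y4 - x3*y1 + x4*y2 + x6*y0)*z5 + (x0*y5 - x1*y4 - x2*y3 + x3*y2 + x4*y1 - x5*y0)*z6 = (x0*(y1*z2 - y2*z1) - x1*(y0*z2 - y2*z0) + x2*(y0*z1 - y1*z0)) + (x0*(y3*z4 - y4*z3) - x3*(y0*z4 - y4*z0) + x4*(y0*z3 - y3*z0)) + (x0*(y5*z6 - y6*z5) - x5*(y0*z6 - y6*z0) + x6*(y0*z5 - y5*z0)) + (x1*(y3*z5 - y5*z3) - x3*(y1*z5 - y5*z1) + x5*(y1*z3 - y3*z1)) - (x1*(y4*z6 - y6*z4) - x4*(y1*z6 - y6*z1)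 + x6*(y1*z4 - y4*z1)) - (x2*(y3*z6 - y6*z3) - x3*(y2*z6 - y6*z2) + x6*(y2*z3 - y3*z2)) - (x2*(y4*z5 - y5*z4) - x4*(y2*z5 - y5*z2) + x5*(y2*z4 - y4*z2)) := by ring
  rw [heq] at h
  exact h

/-- For every orthonormal triple `x, y, z` in `ℝ⁷`, `|φ(x,y,z)| ≤ 1`:
the 3-form `φ` has comass one and is a calibration on `ℝ⁷`. -/
theorem phi_comass_one (x y z : R7)
    (hx : ‖x‖ = 1) (hy : ‖y‖ = 1) (hz : ‖z‖ = 1)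
    (hxy : ⟪x, y⟫ = 0) (hxz : ⟪x, z⟫ = 0) (hyz : ⟪y, z⟫ = 0) :
    |phi x y z| ≤ 1 := by
  have hx1 : ⟪x, x⟫ = 1 := by rw [real_inner_self_eq_norm_mul_norm, hx]; norm_num
  have hy1 : ⟪y, y⟫ = 1 := by rw [real_inner_self_eq_norm_mul_norm, hy]; norm_num
  have hz1 : ⟪z, z⟫ = 1 := by rw [real_inner_self_eq_norm_mul_norm, hz]; norm_num
  simp only [PiLp.inner_apply, RCLike.inner_apply, starRingEnd_apply, star_trivial,
    Fin.sum_univ_seven] at hx1 hy1 hz1 hxy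
  have h := scalar_main (x 0) (x 1) (x 2) (x 3) (x 4) (x 5) (x 6) (y 0) (y 1) (y 2) (y 3) (y 4) (y 5) (y 6) (z 0) (z 1) (z 2) (z 3) (z 4) (z 5) (z 6)
    (by linear_combination hx1) (by linear_combination hy1) (by linear_combination hz1)
    (by linear_combination hxy)
  have hphi : phi x y z = (x 0*(y 1*z 2 - y 2*z 1) - x 1*(y 0*z 2 - y 2*z 0) + x 2*(y 0*z 1 - y 1*z 0)) + (x 0*(y 3*z 4 - y 4*z 3) - x 3*(y 0*z 4 - y 4*z 0) + x 4*(y 0*z 3 - y 3*z 0)) + (x 0*(y 5*z 6 - y 6*z 5) - x 5*(y 0*z 6 - y 6*z 0) + x 6*(y 0*z 5 - y 5*z 0)) + (x 1*(y 3*z 5 - y 5*z 3) - x 3*(y 1*z 5 - y 5*z 1) + x 5*(y 1*z 3 - y 3*z 1)) - (x 1*(y 4*z 6 - y 6*z 4) - x 4*(y 1*z 6 - y 6*z 1) + x 6*(y 1*z 4 - y 4*z 1)) - (x 2*(y 3*z 6 - y 6*z 3) - x 3*(y 2*z 6 - y 6*z 2) + x 6*(y 2*z 3 - y 3*z 2))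 - (x 2*(y 4*z 5 - y 5*z 4) - x 4*(y 2*z 5 - y 5*z 2) + x 5*(y 2*z 4 - y 4*z 2)) := by
    simp only [phi, dx3]
  rw [hphi]
  exact h
end
end

section
/- For every unit vector x ∈ ℝ⁷ and every u ∈ x^⊥, one has ‖x × u‖ = ‖u‖ and x × u ∈ x^⊥; hence the 2-form ω_x(u,v) = ⟨x × u, v⟩ on x^⊥ = T_xS⁶ is antisymmetric and nondegenerate, with ω_x(u, x × u) = ‖u‖² for all u ∈ x^⊥. -/
open RealInnerProductSpace

noncomputable section

/-- The cross product on `ℝ⁷`: the unique vector with `⟪x × y, z⟫ = φ(x,y,z)` for all `z`. -/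
def cross (x y : R7) : R7 := ∑ i, phi x y (stdBasis i) • stdBasis i

lemma crossApply (x y : R7) (k : Fin 7) : cross x y k = phi x y (stdBasis k) := by
  fin_cases k <;>
    simp [cross, stdBasis, Fin.sum_univ_seven, PiLp.add_apply, PiLp.smul_apply,
      EuclideanSpace.single_apply]

set_option maxHeartbeats 1000000 in
lemma inner_cross (x y z : R7) : ⟪cross x y, z⟫ = phi x y z := by
  simp only [PiLp.inner_apply, RCLike.inner_apply, conj_trivial, Fin.sum_univ_seven,
    crossApply, phi, dx3, stdBasis, EuclideanSpace.single_apply, Fin.reduceEq,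
    if_true, if_false, ite_true, ite_false]
  norm_num
  ring

lemma phi_swap (x y z : R7) : phi x y z = - phi x z y := by
  simp only [phi, dx3]; ring

lemma phi_self (x y : R7) : phi x y x = 0 := by
  simp only [phi, dx3]; ring

set_option maxHeartbeats 4000000 in
lemma cross_inner_self (x y : R7) :
    ⟪cross x y, cross x y⟫ = ⟪x, x⟫ * ⟪y, y⟫ - ⟪x, y⟫ ^ 2 := by
  simp only [PiLp.inner_apply, RCLike.inner_apply, conj_trivial, Fin.sum_univ_seven,
    crossApply, phi, dx3, stdBasis, EuclideanSpace.single_apply, Fin.reduceEq,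
    if_true, if_false, ite_true, ite_false]
  norm_num
  ring

theorem omega_on_sphere (x : R7) (hx : ‖x‖ = 1) :
    (∀ u : R7, ⟪x, u⟫ = 0 → ‖cross x u‖ = ‖u‖ ∧ ⟪x, cross x u⟫ = 0) ∧
    (∀ u v : R7, ⟪x, u⟫ = 0 → ⟪x, v⟫ = 0 →
      ⟪cross x u, v⟫ = -⟪cross x v, u⟫) ∧
    (∀ u : R7, ⟪x, u⟫ = 0 →
      (∀ v : R7, ⟪x, v⟫ = 0 → ⟪cross x u, v⟫ = 0) → u = 0) ∧
    (∀ u : R7, ⟪x, u⟫ = 0 → ⟪cross x u, cross x u⟫ = ‖u‖ ^ 2) := by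
  have hsq : ∀ u : R7, ⟪x, u⟫ = 0 → ⟪cross x u, cross x u⟫ = ‖u‖ ^ 2 := by
    intro u hu
    rw [cross_inner_self, hu, real_inner_self_eq_norm_sq, real_inner_self_eq_norm_sq, hx]
    ring
  have hperp : ∀ u : R7, ⟪x, cross x u⟫ = 0 := by
    intro u
    rw [real_inner_comm, inner_cross, phi_self]
  have hnorm : ∀ u : R7, ⟪x, u⟫ = 0 → ‖cross x u‖ = ‖u‖ := by
    intro u hu
    have h := hsq u hu
    rw [real_inner_self_eq_norm_sq] at h
    nlinarith [norm_nonneg (cross x u), norm_nonneg u]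
  refine ⟨fun u hu => ⟨hnorm u hu, hperp u⟩, ?_, ?_, hsq⟩
  · intro u v _ _
    rw [inner_cross, inner_cross, phi_swap]
  · intro u hu h
    have h0 := h (cross x u) (hperp u)
    rw [hsq u hu] at h0
    have : ‖u‖ = 0 := by nlinarith [norm_nonneg u]
    exact norm_eq_zero.mp this
end
end

section
/- Let H be a real inner product space, let D : H → H be a symmetric linear map (⟨Dv, w⟩ = ⟨v, Dw⟩ for all v, w ∈ H), and let J : H → H be a linear isometry (⟨Jv, Jw⟩ = ⟨v, w⟩ for all v, w) satisfying J ∘ J = −id and D ∘ J = −J ∘ D. Let κ ∈ ℝ, let m > 0 be a real number, and suppose a, b ∈ H satisfy D a = −κ·(J a) and m·(J a) + D b + κ·(J b) = 0. Then a = 0. -/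
open RealInnerProductSpace

/-- key computation in the proof that cone solutions have no `log`
terms.  Let `H` be a real inner product space, `D : H → H` a symmetric linear map,
`J : H → H` a linear isometry with `J ∘ J = −id` and `D ∘ J = −J ∘ D`.  If `κ ∈ ℝ`,
`m > 0`, and `a, b ∈ H` satisfy `D a = −κ·(J a)` and `m·(J a) + D b + κ·(J b) = 0`,
then `a = 0`. -/
theorem no_log_terms {H : Type*} [NormedAddCommGroup H] [InnerProductSpace ℝ H]
    (D J : H →ₗ[ℝ] H)
    (hDsymm : ∀ v w : H, ⟪D v, w⟫ = ⟪v, D w⟫)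
    (hJiso : ∀ v w : H, ⟪J v, J w⟫ = ⟪v, w⟫)
    (hJJ : ∀ v : H, J (J v) = -v)
    (hDJ : ∀ v : H, D (J v) = -J (D v))
    (κ m : ℝ) (hm : 0 < m) (a b : H)
    (ha : D a = -κ • J a)
    (hb : m • J a + D b + κ • J b = 0) :
    a = 0 := by
  have hDJa : D (J a) = -κ • a := by
    rw [hDJ, ha]
    simp [map_smul, hJJ, smul_neg]
  have h0 : ⟪m • J a + D b + κ • J b, J a⟫ = 0 := by rw [hb]; simp
  rw [inner_add_left, inner_add_left, real_inner_smul_left, real_inner_smul_left,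
    hJiso, hJiso, hDsymm, hDJa] at h0
  rw [real_inner_smul_right] at h0
  have h1 : m * ⟪a, a⟫ = 0 := by
    have hsym : ⟪b, a⟫ = ⟪a, b⟫ := real_inner_comm _ _
    nlinarith [h0]
  have h2 : ⟪a, a⟫ = 0 := by
    rcases mul_eq_zero.mp h1 with h | h
    · exact absurd h hm.ne'
    · exact h
  exact inner_self_eq_zero.mp h2
end
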